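/- Let π be an admissible symmetric matrix and let c be its pair-factorized triplet weights. For integers y ≥ 3 and x, z ≥ 1 with π(x,y) > 0, define ℓ(x,y,z) := (y−2) · (∑_{v≥1} (c(x,y,v) + c(v,y,z))/v) / (∑_{v≥1} (c(x,y,v) + c(v,y,z))), and define m(x,y) := (1/((y−2)·π(x,y))) · ∑_{z≥1} c(x,y,z)·ℓ(x,y,z). Then ℓ(x,y,z) = (y−2)·h(y)/(y−1) for every z ≥ 1, and m(x,y) = h(y). -/

import Mathlib

open scoped BigOperators

/-- `π(x) = ∑_{y≥1} π(x,y)`, the row sum. -/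
noncomputable def rowSum (p : ℕ → ℕ → ℝ) (x : ℕ) : ℝ := ∑' y : ℕ, p x (y + 1)

/-- An admissible symmetric matrix: nonnegative, symmetric, summable, with
positive row sums. -/
def AdmissibleSym (p : ℕ → ℕ → ℝ) : Prop :=
  (∀ x y, 0 ≤ p x y) ∧ (∀ x y, p x y = p y x) ∧
    Summable (fun xy : ℕ × ℕ => p (xy.1 + 1) (xy.2 + 1)) ∧
    (∀ x : ℕ, 1 ≤ x → 0 < rowSum p x)

/-- `h(x) = (x−1)·∑_{y≥1} π(x,y)/(y·π(x))`. -/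
noncomputable def hPS (p : ℕ → ℕ → ℝ) (x : ℕ) : ℝ :=
  ((x : ℝ) - 1) * ∑' y : ℕ, p x (y + 1) / (((y : ℝ) + 1) * rowSum p x)

/-- The pair-factorized triplet weights `c(x,y,z) = (y−1)·π(x,y)·π(y,z)/π(y)`. -/
noncomputable def cTrip (p : ℕ → ℕ → ℝ) (x y z : ℕ) : ℝ :=
  ((y : ℝ) - 1) * p x y * p y z / rowSum p y

/-- `ℓ(x,y,z)` from the triplet approximation. -/
noncomputable def ellTrip (p : ℕ → ℕ → ℝ) (x y z : ℕ) : ℝ :=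
  ((y : ℝ) - 2) *
      (∑' v : ℕ, (cTrip p x y (v + 1) + cTrip p (v + 1) y z) / ((v : ℝ) + 1)) /
    (∑' v : ℕ, (cTrip p x y (v + 1) + cTrip p (v + 1) y z))

/-- `m(x,y)` from the triplet approximation. -/
noncomputable def mTrip (p : ℕ → ℕ → ℝ) (x y : ℕ) : ℝ :=
  (1 / (((y : ℝ) - 2) * p x y)) * ∑' z : ℕ, cTrip p x y (z + 1) * ellTrip p x y (z + 1)

theorem ell_eq_and_m_eq_h_of_pair_factorized
    (p : ℕ → ℕ → ℝ) (hp : AdmissibleSym p)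
    (x y : ℕ) (hy : 3 ≤ y) (hx : 1 ≤ x) (hpos : 0 < p x y) :
    (∀ z : ℕ, 1 ≤ z →
      ellTrip p x y z = ((y : ℝ) - 2) * hPS p y / ((y : ℝ) - 1)) ∧
    mTrip p x y = hPS p y := by
  obtain ⟨hnn, hsym, hsum, hrow⟩ := hp
  have hy3 : (3 : ℝ) ≤ (y : ℝ) := by exact_mod_cast hy
  have hy1 : (y : ℝ) - 1 ≠ 0 := by linarith
  have hy2 : (y : ℝ) - 2 ≠ 0 := by linarith
  have hR : 0 < rowSum p y := hrow y (by omega)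
  set R := rowSum p y with hRdef
  set S := ∑' v : ℕ, p y (v + 1) / ((v : ℝ) + 1) with hSdef
  -- hPS in terms of S and R
  have hPS_eq : hPS p y = ((y : ℝ) - 1) * S / R := by
    have h1 : ∀ v : ℕ, p y (v + 1) / (((v : ℝ) + 1) * rowSum p y)
        = p y (v + 1) / ((v : ℝ) + 1) * (1 / R) := by
      intro v; rw [← hRdef, ← div_div, div_eq_mul_one_div]
    rw [hPS, tsum_congr h1, tsum_mul_right, ← hSdef]
    ring
  -- the constant value of ℓ
  have hell : ∀ z : ℕ, ellTrip p x y z = ((y : ℝ) - 2) * S / R := by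
    intro z
    have hpz : 0 ≤ p y z := hnn _ _
    set a : ℝ := ((y : ℝ) - 1) * (p x y + p y z) / R with hadef
    have ha : 0 < a := by
      apply div_pos _ hR
      apply mul_pos (by linarith) (by linarith)
    have hterm : ∀ v : ℕ, cTrip p x y (v + 1) + cTrip p (v + 1) y z
        = a * p y (v + 1) := by
      intro v
      rw [cTrip, cTrip, hsym (v + 1) y, hadef, ← hRdef]
      ring
    have hterm2 : ∀ v : ℕ, (cTrip p x y (v + 1) + cTrip p (v + 1) y z) / ((v : ℝ) + 1)
        = a * (p y (v + 1) / ((v : ℝ) + 1)) := by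
      intro v; rw [hterm v]; ring
    have ht1 : (∑' v : ℕ, (cTrip p x y (v + 1) + cTrip p (v + 1) y z)) = a * R := by
      rw [tsum_congr hterm, tsum_mul_left]; rfl
    have ht2 : (∑' v : ℕ, (cTrip p x y (v + 1) + cTrip p (v + 1) y z) / ((v : ℝ) + 1))
        = a * S := by
      rw [tsum_congr hterm2, tsum_mul_left]
    rw [ellTrip, ht1, ht2]
    field_simp
  constructor
  · intro z _
    rw [hell z, hPS_eq]
    field_simp
  · set L : ℝ := ((y : ℝ) - 2) * S / R with hLdef
    have hterm : ∀ z : ℕ, cTrip p x y (z + 1) * ellTrip p x y (z + 1)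
        = (((y : ℝ) - 1) * p x y / R * L) * p y (z + 1) := by
      intro z
      rw [hell (z + 1), cTrip, ← hRdef]
      ring
    have ht : (∑' z : ℕ, cTrip p x y (z + 1) * ellTrip p x y (z + 1))
        = (((y : ℝ) - 1) * p x y / R * L) * R := by
      rw [tsum_congr hterm, tsum_mul_left]; rfl
    rw [mTrip, ht, hPS_eq, hLdef]
    field_simp
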